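/- For each i in a finite index set {1,…,m}, let Ω_i be a finite nonempty set and let G_i be a group acting primitively on Ω_i. Then the direct product G = G_1 × ⋯ × G_m, acting componentwise on Ω = Ω_1 × ⋯ × Ω_m, is pre-primitive: every G-invariant equivalence relation on Ω is the orbit equivalence relation of some subgroup of G. -/

import Mathlib

/-- A relation on `Ω` is `G`-invariant if it is preserved by the action of every
element of `G`. -/
def MulInvariant (G : Type*) {Ω : Type*} [Group G] [MulAction G Ω]
    (r : Ω → Ω → Prop) : Prop :=
  ∀ (g : G) (x y : Ω), r x y ↔ r (g • x) (g • y)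

/-- A transitive group action is pre-primitive if every invariant equivalence
relation is the orbit equivalence relation of some subgroup. -/
def PrePrimitive (G Ω : Type*) [Group G] [MulAction G Ω] : Prop :=
  ∀ r : Ω → Ω → Prop, Equivalence r → MulInvariant G r →
    ∃ N : Subgroup G, ∀ x y : Ω, r x y ↔ ∃ n ∈ N, n • x = y

/-- A finite direct product of primitive groups, acting
componentwise on the product of the underlying (finite, nonempty) sets, is
pre-primitive. -/
theorem prePrimitive_pi_of_primitive {ι : Type*} [Fintype ι]
    {Ω : ι → Type*} {G : ι → Type*} [∀ i, Group (G i)] [∀ i, MulAction (G i) (Ω i)]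
    [∀ i, Finite (Ω i)] [∀ i, Nonempty (Ω i)]
    (hprim : ∀ i, MulAction.IsPretransitive (G i) (Ω i) ∧
      ∀ r : Ω i → Ω i → Prop, Equivalence r → MulInvariant (G i) r →
        (∀ x y : Ω i, r x y ↔ x = y) ∨ (∀ x y : Ω i, r x y)) :
    PrePrimitive (∀ i, G i) (∀ i, Ω i) := by
  classical
  intro r hr hinv
  have hmove : ∀ i (a b : Ω i), ∃ g : G i, g • a = b := fun i a b =>
    letI := (hprim i).1; MulAction.exists_smul_eq (G i) a b
  set x₀ : ∀ i, Ω i := Classical.arbitrary _ with hx₀def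
  -- `ρ i a b` is: changing coordinate i from a to b stays in the class
  -- (independent of the base point)
  have hρ_indep : ∀ (i : ι) (x : ∀ j, Ω j) (a b : Ω i),
      r (Function.update x i a) (Function.update x i b) ↔
      r (Function.update x₀ i a) (Function.update x₀ i b) := by
    intro i x a b
    choose g hg using fun j => hmove j (x j) (x₀ j)
    set k : ∀ j, G j := Function.update g i 1 with hkdef
    have hk : ∀ c : Ω i, k • Function.update x i c = Function.update x₀ i c := by
      intro c; funext j
      rcases eq_or_ne j i with rfl | hj
      · simp [hkdef, Pi.smul_apply']
      · simp [hkdef, Pi.smul_apply', Function.update_of_ne hj, hg]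
    rw [hinv k (Function.update x i a) (Function.update x i b), hk, hk]
  -- action of a single coordinate
  have hsingle : ∀ (i : ι) (g : G i) (x : ∀ j, Ω j),
      (Function.update (1 : ∀ j, G j) i g) • x = Function.update x i (g • x i) := by
    intro i g x; funext j
    rcases eq_or_ne j i with rfl | hj
    · simp [Pi.smul_apply']
    · simp [Pi.smul_apply', Function.update_of_ne hj]
  -- dichotomy for ρ
  have hρdi : ∀ i : ι,
      (∀ a b : Ω i, r (Function.update x₀ i a) (Function.update x₀ i b) ↔ a = b) ∨
      (∀ a b : Ω i, r (Function.update x₀ i a) (Function.update x₀ i b)) := by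
    intro i
    have hone : ∀ (g : G i) (a b : Ω i),
        r (Function.update x₀ i a) (Function.update x₀ i b) →
        r (Function.update x₀ i (g • a)) (Function.update x₀ i (g • b)) := by
      intro g a b h
      have h2 := (hinv (Function.update (1 : ∀ j, G j) i g) _ _).mp h
      rwa [hsingle, hsingle, Function.update_idem, Function.update_idem,
        Function.update_self, Function.update_self] at h2
    refine (hprim i).2 _ ⟨fun a => hr.refl _, fun h => hr.symm h, fun h h' => hr.trans h h'⟩
      (fun g a b => ⟨hone g a b, fun h => by simpa using hone g⁻¹ _ _ h⟩)
  -- dichotomy for τ (linkage relation)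
  have hτdi : ∀ i : ι,
      (∀ a b : Ω i, (∃ x y, r x y ∧ x i = a ∧ y i = b) ↔ a = b) ∨
      (∀ a b : Ω i, ∃ x y, r x y ∧ x i = a ∧ y i = b) := by
    intro i
    have hone : ∀ (g : G i) (a b : Ω i), (∃ x y, r x y ∧ x i = a ∧ y i = b) →
        ∃ x y, r x y ∧ x i = g • a ∧ y i = g • b := by
      rintro g a b ⟨x, y, hxy, hxa, hyb⟩
      refine ⟨(Function.update (1 : ∀ j, G j) i g) • x,
        (Function.update (1 : ∀ j, G j) i g) • y, (hinv _ _ _).mp hxy, ?_, ?_⟩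
      · rw [hsingle, Function.update_self, hxa]
      · rw [hsingle, Function.update_self, hyb]
    refine (hprim i).2 _ ⟨?_, ?_, ?_⟩
      (fun g a b => ⟨hone g a b, fun h => by simpa using hone g⁻¹ _ _ h⟩)
    · intro a
      exact ⟨Function.update x₀ i a, Function.update x₀ i a, hr.refl _,
        Function.update_self .., Function.update_self ..⟩
    · rintro a b ⟨x, y, hxy, hxa, hyb⟩
      exact ⟨y, x, hr.symm hxy, hyb, hxa⟩
    · rintro a b c ⟨x, y, hxy, hxa, hyb⟩ ⟨u, v, huv, hub, hvc⟩
      choose g hg using fun j => hmove j (u j) (y j)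
      set k : ∀ j, G j := Function.update g i 1 with hkdef
      have hku : k • u = y := by
        funext j
        rcases eq_or_ne j i with rfl | hj
        · simp [hkdef, Pi.smul_apply', hub, hyb]
        · simp [hkdef, Pi.smul_apply', Function.update_of_ne hj, hg]
      refine ⟨x, k • v, hr.trans hxy (hku ▸ (hinv k u v).mp huv), hxa, ?_⟩
      simp [hkdef, Pi.smul_apply', hvc]
  -- chaining freedom on universal-ρ coordinates
  have hchain : ∀ (s : Finset ι) (x y : ∀ j, Ω j),
      (∀ i, x i ≠ y i → i ∈ s ∧
        ∀ a b : Ω i, r (Function.update x₀ i a) (Function.update x₀ i b)) → r x y := by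
    intro s
    induction s using Finset.induction_on with
    | empty =>
      intro x y h
      have : x = y := funext fun i => by
        by_contra hne; exact absurd (h i hne).1 (Finset.notMem_empty i)
      exact this ▸ hr.refl x
    | @insert i s hi ih =>
      intro x y h
      set y' : ∀ j, Ω j := Function.update y i (x i) with hy'def
      have h1 : r x y' := by
        apply ih
        intro j hj
        rcases eq_or_ne j i with rfl | hji
        · exact absurd (by simp [hy'def]) hj
        · have := h j (by simpa [hy'def, Function.update_of_ne hji] using hj)
          refine ⟨?_, this.2⟩
          rcases Finset.mem_insert.mp this.1 with h' | h'
          · exact absurd h' hji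
          · exact h'
      by_cases hxy : x i = y i
      · have : y' = y := by rw [hy'def, hxy, Function.update_eq_self]
        exact this ▸ h1
      · have hU := (h i hxy).2
        have h2 : r y' y := by
          have := (hρ_indep i y' (x i) (y i)).mpr (hU (x i) (y i))
          have e1 : Function.update y' i (x i) = y' := by
            rw [hy'def, Function.update_idem]
          have e2 : Function.update y' i (y i) = y := by
            rw [hy'def, Function.update_idem, Function.update_eq_self]
          rwa [e1, e2] at this
        exact hr.trans h1 h2
  -- regularity on diagonal coordinates
  have hreg : ∀ i : ι,
      (∀ a b : Ω i, r (Function.update x₀ i a) (Function.update x₀ i b) ↔ a = b) →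
      (∀ a b : Ω i, ∃ x y, r x y ∧ x i = a ∧ y i = b) →
      ∀ (g : G i) (a b : Ω i), g • a = a → g • b = b := by
    intro i heq huniv g a b hga
    obtain ⟨x, y, hxy, hxa, hyb⟩ := huniv a b
    have hσx : (Function.update (1 : ∀ j, G j) i g) • x = x := by
      rw [hsingle, hxa, hga, ← hxa, Function.update_eq_self]
    have h2 : r x ((Function.update (1 : ∀ j, G j) i g) • y) :=
      hσx ▸ (hinv (Function.update (1 : ∀ j, G j) i g) x y).mp hxy
    have h3 : r y (Function.update y i (g • y i)) := by
      rw [← hsingle]; exact hr.trans (hr.symm hxy) h2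
    have h4 : r (Function.update y i (y i)) (Function.update y i (g • y i)) := by
      rwa [Function.update_eq_self]
    have h5 := (hρ_indep i y (y i) (g • y i)).mp h4
    have h6 := (heq (y i) (g • y i)).mp h5
    rw [← hyb, ← h6]
  -- commutativity of the action on diagonal coordinates
  have hcomm : ∀ i : ι,
      (∀ a b : Ω i, r (Function.update x₀ i a) (Function.update x₀ i b) ↔ a = b) →
      (∀ a b : Ω i, ∃ x y, r x y ∧ x i = a ∧ y i = b) →
      ∀ (g k : G i) (ω : Ω i), g • k • ω = k • g • ω := by
    intro i heq huniv g k ω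
    by_cases hg0 : g • x₀ i = x₀ i
    · have hg : ∀ ω' : Ω i, g • ω' = ω' := fun ω' => hreg i heq huniv g (x₀ i) ω' hg0
      rw [hg, hg]
    · set B : Subgroup (G i) :=
        { carrier := {h | ∃ n : ℤ, ∀ ω' : Ω i, h • ω' = g ^ n • ω'}
          one_mem' := ⟨0, fun ω' => by simp⟩
          mul_mem' := by
            rintro a b ⟨m, hm⟩ ⟨n, hn⟩
            refine ⟨m + n, fun ω' => ?_⟩
            rw [mul_smul, hn, hm, smul_smul, ← zpow_add]
          inv_mem' := by
            rintro a ⟨m, hm⟩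
            refine ⟨-m, fun ω' => ?_⟩
            have h1 : a • g ^ (-m) • ω' = ω' := by
              rw [hm, smul_smul, ← zpow_add, add_neg_cancel, zpow_zero, one_smul]
            calc a⁻¹ • ω' = a⁻¹ • a • g ^ (-m) • ω' := by rw [h1]
              _ = g ^ (-m) • ω' := inv_smul_smul a _ } with hBdef
      have hstab : ∀ c : G i, c • x₀ i = x₀ i → c ∈ B := fun c hc =>
        ⟨0, fun ω' => by
          rw [zpow_zero, one_smul]; exact hreg i heq huniv c (x₀ i) ω' hc⟩
      -- the between-subgroup relation
      set r' : Ω i → Ω i → Prop :=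
        fun u v => ∃ c d : G i, c • x₀ i = u ∧ d • x₀ i = v ∧ c⁻¹ * d ∈ B with hr'def
      have hr'equiv : Equivalence r' := by
        constructor
        · intro u
          obtain ⟨c, hc⟩ := hmove i (x₀ i) u
          exact ⟨c, c, hc, hc, by simpa using B.one_mem⟩
        · rintro u v ⟨c, d, hc, hd, hm⟩
          exact ⟨d, c, hd, hc, by simpa [mul_inv_rev] using B.inv_mem hm⟩
        · rintro u v w ⟨c₁, d₁, hc₁, hd₁, h₁⟩ ⟨c₂, d₂, hc₂, hd₂, h₂⟩
          have hmid : c₂⁻¹ * d₁ ∈ B := by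
            apply hstab
            rw [mul_smul, hd₁, ← hc₂, inv_smul_smul]
          refine ⟨c₁, d₂, hc₁, hd₂, ?_⟩
          have : c₁⁻¹ * d₂ = (c₁⁻¹ * d₁) * (c₂⁻¹ * d₁)⁻¹ * (c₂⁻¹ * d₂) := by group
          rw [this]
          exact B.mul_mem (B.mul_mem h₁ (B.inv_mem hmid)) h₂
      have hr'one : ∀ (c : G i) (u v : Ω i), r' u v → r' (c • u) (c • v) := by
        rintro c u v ⟨c₁, d₁, hc₁, hd₁, hm⟩
        refine ⟨c * c₁, c * d₁, by rw [mul_smul, hc₁], by rw [mul_smul, hd₁], ?_⟩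
        have : (c * c₁)⁻¹ * (c * d₁) = c₁⁻¹ * d₁ := by group
        rw [this]; exact hm
      have hr'inv : MulInvariant (G i) r' :=
        fun c u v => ⟨hr'one c u v, fun h => by simpa using hr'one c⁻¹ _ _ h⟩
      have hB : ∀ h : G i, h ∈ B := by
        intro h
        rcases (hprim i).2 r' hr'equiv hr'inv with hcase | hcase
        · exfalso
          have : r' (x₀ i) (g • x₀ i) :=
            ⟨1, g, one_smul _ _, rfl, by simpa using (show g ∈ B from (⟨1, fun ω' => by rw [zpow_one]⟩ :
              ∃ n : ℤ, ∀ ω' : Ω i, g • ω' = g ^ n • ω'))⟩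
          exact hg0 ((hcase _ _).mp this).symm
        · obtain ⟨c₁, d₁, hc₁, hd₁, hm⟩ := hcase (x₀ i) (h • x₀ i)
          have hc₁B : c₁ ∈ B := hstab c₁ hc₁
          have hd₁B : d₁ ∈ B := by
            have := B.mul_mem hc₁B hm
            rwa [← mul_assoc, mul_inv_cancel, one_mul] at this
          have hlast : d₁⁻¹ * h ∈ B := by
            apply hstab
            rw [mul_smul, ← hd₁, inv_smul_smul]
          have := B.mul_mem hd₁B hlast
          rwa [← mul_assoc, mul_inv_cancel, one_mul] at this
      obtain ⟨n, hn⟩ := hB k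
      calc g • k • ω = g • g ^ n • ω := by rw [hn]
        _ = (g * g ^ n) • ω := smul_smul g (g ^ n) ω
        _ = (g ^ n * g) • ω := by rw [((Commute.refl g).zpow_right n).eq]
        _ = g ^ n • g • ω := (smul_smul (g ^ n) g ω).symm
        _ = k • g • ω := (hn (g • ω)).symm
  -- the kernel subgroup
  refine ⟨{ carrier := {g | ∀ x, r x (g • x)}
            one_mem' := fun x => by simpa using hr.refl x
            mul_mem' := by
              intro a b ha hb x
              rw [mul_smul]
              exact hr.trans (hb x) (ha (b • x))
            inv_mem' := by
              intro a ha x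
              have := ha (a⁻¹ • x)
              rw [smul_inv_smul] at this
              exact hr.symm this }, ?_⟩
  intro x y
  constructor
  · intro hxy
    choose f hf using fun i => hmove i (x i) (y i)
    set n : ∀ i, G i := fun i => if x i = y i then 1 else f i with hndef
    have hnx : ∀ i, n i • x i = y i := by
      intro i
      by_cases h : x i = y i
      · simp [hndef, h]
      · simp [hndef, h, hf i]
    have hnmem : ∀ z : ∀ i, Ω i, r z (n • z) := by
      intro z
      choose gz hgz using fun i => hmove i (x i) (z i)
      have hgx : gz • x = z := funext fun i => by rw [Pi.smul_apply']; exact hgz i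
      have h1 : r z (gz • y) := by
        have := (hinv gz x y).mp hxy
        rwa [hgx] at this
      have h2 : r (gz • y) (n • z) := by
        apply hchain Finset.univ
        intro i hne
        refine ⟨Finset.mem_univ i, ?_⟩
        by_contra hU
        have hρeq := (hρdi i).resolve_right hU
        apply hne
        rw [Pi.smul_apply', Pi.smul_apply', ← hgz i]
        by_cases h : x i = y i
        · rw [show n i = 1 by simp [hndef, h], one_smul, ← h]
        · have hτu : ∀ a b : Ω i, ∃ u v, r u v ∧ u i = a ∧ v i = b :=
            (hτdi i).resolve_left fun he => h ((he _ _).mp ⟨x, y, hxy, rfl, rfl⟩)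
          calc gz i • y i = gz i • n i • x i := by rw [hnx i]
            _ = n i • gz i • x i := hcomm i hρeq hτu (gz i) (n i) (x i)
      exact hr.trans h1 h2
    exact ⟨n, hnmem, funext fun i => by rw [Pi.smul_apply']; exact hnx i⟩
  · rintro ⟨m, hm, hmx⟩
    exact hmx ▸ hm x
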